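/- arXiv:2603.28743 — 3 statements merged into one kernel-verified Lean document; each statement's English description precedes it below -/
import Mathlib

section
/- Let V be a real inner product space and let w, δ ∈ V with w ≠ 0 and ‖δ‖ ≤ ‖w‖/2. Then |‖w + δ‖ − ‖w‖ − ⟨w, δ⟩/‖w‖| ≤ 2‖δ‖²/‖w‖. -/
/-- Let V be a real inner product space and let w, δ ∈ V with w ≠ 0 and
‖δ‖ ≤ ‖w‖/2. Then |‖w + δ‖ − ‖w‖ − ⟨w, δ⟩/‖w‖| ≤ 2‖δ‖²/‖w‖. -/
theorem norm_add_first_order_expansion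
    {V : Type*} [NormedAddCommGroup V] [InnerProductSpace ℝ V]
    (w δ : V) (hw : w ≠ 0) (hδ : ‖δ‖ ≤ ‖w‖ / 2) :
    |‖w + δ‖ - ‖w‖ - (inner ℝ w δ : ℝ) / ‖w‖| ≤ 2 * ‖δ‖ ^ 2 / ‖w‖ := by
  have hnw : (0:ℝ) < ‖w‖ := norm_pos_iff.mpr hw
  set nw : ℝ := ‖w‖ with hnwdef
  set i : ℝ := inner ℝ w δ with hidef
  set a : ℝ := ‖w + δ‖ with hadef
  have hi : |i| ≤ nw * ‖δ‖ := abs_real_inner_le_norm w δ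
  have hi1 : -(nw * ‖δ‖) ≤ i := neg_le_of_abs_le hi
  have hi2 : i ≤ nw * ‖δ‖ := le_of_abs_le hi
  set b : ℝ := nw + i / nw with hbdef
  clear_value nw i a b
  have hb : nw / 2 ≤ b := by
    have : -‖δ‖ ≤ i / nw := by
      rw [le_div_iff₀ hnw]
      nlinarith
    have hd : -(nw/2) ≤ -‖δ‖ := by linarith
    simp only [hbdef]; linarith
  have ha0 : 0 ≤ a := hadef ▸ norm_nonneg _
  have hab : 0 < a + b := by
    have : (0:ℝ) < nw / 2 := by linarith
    linarith [ha0, hb]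
  have hsq : a ^ 2 = nw ^ 2 + 2 * i + ‖δ‖ ^ 2 := by
    simpa [hidef, hnwdef, hadef] using norm_add_sq_real w δ
  have hdiff : a ^ 2 - b ^ 2 = ‖δ‖ ^ 2 - i ^ 2 / nw ^ 2 := by
    rw [hsq, hbdef]
    field_simp
    ring
  have hdiff0 : 0 ≤ a ^ 2 - b ^ 2 := by
    rw [hdiff]
    have : i ^ 2 ≤ nw ^ 2 * ‖δ‖ ^ 2 := by nlinarith [abs_nonneg i, sq_abs i]
    have h2 : i ^ 2 / nw ^ 2 ≤ ‖δ‖ ^ 2 := by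
      rw [div_le_iff₀ (by positivity)]; nlinarith
    linarith
  have hdiff1 : a ^ 2 - b ^ 2 ≤ ‖δ‖ ^ 2 := by
    rw [hdiff]
    have : 0 ≤ i ^ 2 / nw ^ 2 := by positivity
    linarith
  have key : a - b = (a ^ 2 - b ^ 2) / (a + b) := by
    field_simp
    ring
  have hle : a - b ≤ 2 * ‖δ‖ ^ 2 / nw := by
    rw [key]
    rw [div_le_div_iff₀ hab hnw]
    nlinarith [mul_le_mul_of_nonneg_right hdiff1 hnw.le,
      mul_nonneg (sq_nonneg ‖δ‖) (by linarith : (0:ℝ) ≤ a + b - nw / 2)]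
  have hge : 0 ≤ a - b := by
    rw [key]
    positivity
  have : |a - b| ≤ 2 * ‖δ‖ ^ 2 / nw := by
    rw [abs_of_nonneg hge]; exact hle
  simpa [hbdef, hnwdef, hidef, sub_sub] using this
end

section
/- Let V be a real inner product space, W ∈ V with ‖W‖ = c_W > 0, and fix G ∈ V and λ ∈ ℝ. For η > 0 define the weight-decayed, renormalized update W⁺(η) = c_W · (W − η·G − η·λ·W)/‖W − η·G − η·λ·W‖. Then there exist constants C > 0 and ε > 0 such that for all 0 < η ≤ ε, ‖W⁺(η) − W + η·Π_T(G)‖ ≤ C·η², where Π_T is the tangent-space projection at W. (Weight decay is a first-order no-op under Frobenius renormalization.) -/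
/-- Let V be a real inner product space, W ∈ V with ‖W‖ = c_W > 0, and fix
G ∈ V, λ ∈ ℝ.  For η > 0 define W⁺(η) = c_W·(W − η·G − η·λ·W)/‖W − η·G − η·λ·W‖.  Then
there exist C > 0 and ε > 0 such that for all 0 < η ≤ ε,
‖W⁺(η) − W + η·Π_T(G)‖ ≤ C·η², where Π_T(Δ) = Δ − (⟨Δ, W⟩/‖W‖²)·W is the tangent-space
projection at W.  (Weight decay is a first-order no-op under Frobenius renormalization.) -/
theorem weight_decay_first_order_noop
    {V : Type*} [NormedAddCommGroup V] [InnerProductSpace ℝ V]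
    (W : V) (cW : ℝ) (hcW : 0 < cW) (hW : ‖W‖ = cW) (G : V) (lam : ℝ) :
    ∃ C > (0 : ℝ), ∃ ε > (0 : ℝ), ∀ η : ℝ, 0 < η → η ≤ ε →
      ‖(cW / ‖W - η • G - (η * lam) • W‖) • (W - η • G - (η * lam) • W) - W
          + η • (G - ((inner ℝ G W : ℝ) / ‖W‖ ^ 2) • W)‖
        ≤ C * η ^ 2 := by
  classical
  set u : ℝ → V := fun η => W - η • G - (η * lam) • W with hu_def
  set P : V := G - ((inner ℝ G W : ℝ) / ‖W‖ ^ 2) • W with hP_def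
  set f : ℝ → V := fun η => (cW / ‖u η‖) • u η - W + η • P with hf_def
  have hu0 : u 0 = W := by simp [hu_def]
  -- smoothness of u
  have hu_cd : ContDiff ℝ 2 u := by
    exact (contDiff_const.sub (contDiff_id.smul contDiff_const)).sub
      ((contDiff_id.mul contDiff_const).smul contDiff_const)
  have hucont : Continuous u := hu_cd.continuous
  have hs_open : IsOpen {η : ℝ | u η ≠ 0} :=
    isOpen_compl_singleton.preimage hucont
  have h0s : (0 : ℝ) ∈ {η : ℝ | u η ≠ 0} := by
    simp only [Set.mem_setOf_eq, hu0]
    intro h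
    rw [h, norm_zero] at hW; linarith
  -- smoothness of f on s
  have hfAt : ∀ η ∈ {η : ℝ | u η ≠ 0}, ContDiffAt ℝ 2 f η := by
    intro η hη
    have h1 : ContDiffAt ℝ 2 (fun x => ‖u x‖) η := hu_cd.contDiffAt.norm ℝ hη
    have h2 : ContDiffAt ℝ 2 (fun x => cW / ‖u x‖) η :=
      contDiffAt_const.div h1 (norm_ne_zero_iff.2 hη)
    exact ((h2.smul hu_cd.contDiffAt).sub contDiffAt_const).add
      ((contDiff_id.smul contDiff_const).contDiffAt)
  have hf_cd : ContDiffOn ℝ 2 f {η : ℝ | u η ≠ 0} :=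
    fun η hη => (hfAt η hη).contDiffWithinAt
  have hderiv_cd : ContDiffAt ℝ 1 (deriv f) 0 :=
    (hf_cd.deriv_of_isOpen hs_open (by norm_num)).contDiffAt (hs_open.mem_nhds h0s)
  obtain ⟨K, t, ht, hlip⟩ := hderiv_cd.exists_lipschitzOnWith
  -- explicit derivative at 0
  have hU' : HasDerivAt u (-G - lam • W) 0 := by
    have : HasDerivAt u ((0 : V) - (1:ℝ) • G - ((1 * lam) • W)) 0 :=
      ((hasDerivAt_const 0 W).sub ((hasDerivAt_id 0).smul_const G)).sub
        (((hasDerivAt_id 0).mul_const lam).smul_const W)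
    simpa using this
  have hnorm0 : ‖u 0‖ = cW := by rw [hu0, hW]
  have hr : HasDerivAt (fun x => ‖u x‖) ((inner ℝ (u 0) (-G - lam • W) : ℝ) / cW) 0 := by
    have hsq : HasDerivAt (fun x => ‖u x‖ ^ 2)
        (2 * (inner ℝ (u 0) (-G - lam • W) : ℝ)) 0 := hU'.norm_sq
    have h := hsq.sqrt (by rw [hnorm0]; positivity)
    have heq : (fun x => Real.sqrt (‖u x‖ ^ 2)) = fun x => ‖u x‖ := by
      funext x; rw [Real.sqrt_sq (norm_nonneg _)]
    rw [heq] at h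
    convert h using 1
    rw [hnorm0, Real.sqrt_sq hcW.le]
    field_simp
  have hsdiv : HasDerivAt (fun x => cW / ‖u x‖)
      ((0 * ‖u 0‖ - cW * ((inner ℝ (u 0) (-G - lam • W) : ℝ) / cW)) / ‖u 0‖ ^ 2) 0 :=
    (hasDerivAt_const 0 cW).div hr (by rw [hnorm0]; exact ne_of_gt hcW)
  have hD0 : HasDerivAt f 0 0 := by
    have h1 := (hsdiv.smul hU').sub_const W
    have h2 := h1.add ((hasDerivAt_id 0).smul_const P)
    have h3 : HasDerivAt f
        ((cW / ‖u 0‖) • (-G - lam • W) +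
          ((0 * ‖u 0‖ - cW * ((inner ℝ (u 0) (-G - lam • W) : ℝ) / cW)) / ‖u 0‖ ^ 2) • u 0
          + (1:ℝ) • P) 0 := h2
    convert h3 using 1
    rw [hu0, hW, hP_def]
    have hcW0 : cW ≠ 0 := ne_of_gt hcW
    have hiW : (inner ℝ W W : ℝ) = cW ^ 2 := by
      rw [real_inner_self_eq_norm_sq, hW]
    have hinner : (inner ℝ W (-G - lam • W) : ℝ) = -(inner ℝ W G : ℝ) - lam * cW ^ 2 := by
      rw [inner_sub_right, inner_neg_right, inner_smul_right, hiW]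
    rw [hinner]
    have hGW : (inner ℝ G W : ℝ) = (inner ℝ W G : ℝ) := real_inner_comm W G
    rw [hW, hGW]
    rw [div_self hcW0]
    have : (0 * cW - cW * ((-(inner ℝ W G : ℝ) - lam * cW ^ 2) / cW)) / cW ^ 2
        = (inner ℝ W G : ℝ) / cW ^ 2 + lam := by
      field_simp
      ring
    rw [this]
    simp only [one_smul]
    module
  have hderiv0 : deriv f 0 = 0 := hD0.deriv
  -- choose δ
  obtain ⟨δ, hδpos, hδ⟩ : ∃ δ > 0, Metric.ball (0:ℝ) δ ⊆ t ∩ {η : ℝ | u η ≠ 0} := by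
    have : t ∩ {η : ℝ | u η ≠ 0} ∈ nhds (0:ℝ) :=
      Filter.inter_mem ht (hs_open.mem_nhds h0s)
    exact Metric.mem_nhds_iff.1 this
  refine ⟨(K : ℝ) + 1, by positivity, δ / 2, by positivity, ?_⟩
  intro η hη0 hηε
  have hball : Set.Icc (0:ℝ) η ⊆ Metric.ball (0:ℝ) δ := by
    intro x hx
    rw [Metric.mem_ball, Real.dist_eq, sub_zero, abs_of_nonneg hx.1]
    linarith [hx.2]
  have hmvt : ‖f η - f 0‖ ≤ ((K:ℝ) * η) * (η - 0) := by
    apply norm_image_sub_le_of_norm_deriv_le_segment'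
      (f' := fun x => deriv f x) (C := (K:ℝ) * η)
    · intro x hx
      have hxs : u x ≠ 0 := (hδ (hball hx)).2
      exact (((hfAt x hxs).differentiableAt (by norm_num)).hasDerivAt).hasDerivWithinAt
    · intro x hx
      have hxmem : x ∈ Metric.ball (0:ℝ) δ := hball ⟨hx.1, hx.2.le⟩
      have hxt : x ∈ t := (hδ hxmem).1
      have h0t : (0:ℝ) ∈ t := (hδ (Metric.mem_ball_self hδpos)).1
      have := hlip.dist_le_mul x hxt 0 h0t
      rw [hderiv0, dist_eq_norm, sub_zero, Real.dist_eq, sub_zero,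
        abs_of_nonneg hx.1] at this
      calc ‖deriv f x‖ ≤ (K:ℝ) * x := this
        _ ≤ (K:ℝ) * η := by
            apply mul_le_mul_of_nonneg_left hx.2.le K.coe_nonneg
    · exact ⟨le_of_lt hη0, le_refl η⟩
  have hf0 : f 0 = 0 := by
    simp only [hf_def, hu0, hW, zero_smul, add_zero, div_self (ne_of_gt hcW), one_smul, sub_self]
  rw [hf0, sub_zero] at hmvt
  calc ‖f η‖ ≤ (K:ℝ) * η * (η - 0) := hmvt
    _ = (K:ℝ) * η ^ 2 := by ring
    _ ≤ ((K:ℝ) + 1) * η ^ 2 := by nlinarith [sq_nonneg η]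
end

section
/- Fix an integer d ≥ 1 and a real ε > 0. Let P = I − (1/d)·𝟙𝟙ᵀ on ℝ^d, and for u ∈ ℝ^d set v = Pu and σ = √(‖v‖₂²/d + ε). Then the LayerNorm Jacobian J_LN(u): h ↦ (1/σ)·Ph − (⟨v, h⟩/(d·σ³))·v has operator norm at most 1/σ, and hence at most 1/√ε, uniformly in u. (The LayerNorm Jacobian is O(1) in operator norm, which is the key step showing that post-norm residual blocks obey the same depth-scaling exponent as pre-norm blocks.) -/
open scoped BigOperators

/-- The mean-centering projection P = I − (1/d)·𝟙𝟙ᵀ on ℝ^d: (P u)_i = u_i − (1/d)Σ_j u_j. -/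
noncomputable def centerP (d : ℕ) (u : EuclideanSpace ℝ (Fin d)) :
    EuclideanSpace ℝ (Fin d) :=
  (WithLp.equiv 2 (Fin d → ℝ)).symm (fun i => u i - (∑ j, u j) / d)

/-- σ(u) = √(‖P u‖₂²/d + ε). -/
noncomputable def lnSigma (d : ℕ) (ε : ℝ) (u : EuclideanSpace ℝ (Fin d)) : ℝ :=
  Real.sqrt (‖centerP d u‖ ^ 2 / d + ε)

lemma centerP_apply (d : ℕ) (u : EuclideanSpace ℝ (Fin d)) (i : Fin d) :
    centerP d u i = u i - (∑ j, u j) / d := rfl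

lemma centerP_sum_zero (d : ℕ) (hd : 1 ≤ d) (u : EuclideanSpace ℝ (Fin d)) :
    ∑ i, centerP d u i = 0 := by
  have hd0 : (d : ℝ) ≠ 0 := by positivity
  simp only [centerP_apply, Finset.sum_sub_distrib, Finset.sum_const,
    Finset.card_univ, Fintype.card_fin, nsmul_eq_mul]
  field_simp
  ring

lemma inner_centerP (d : ℕ) (hd : 1 ≤ d) (u h : EuclideanSpace ℝ (Fin d)) :
    (inner ℝ (centerP d u) (centerP d h) : ℝ) = inner ℝ (centerP d u) h := by
  have hsum := centerP_sum_zero d hd u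
  simp only [PiLp.inner_apply, RCLike.inner_apply, conj_trivial, centerP_apply d h]
  have : ∑ i, centerP d u i * (h i - (∑ j, h j) / d)
      = ∑ i, centerP d u i * h i - ((∑ j, h j) / d) * ∑ i, centerP d u i := by
    rw [Finset.mul_sum]
    rw [← Finset.sum_sub_distrib]
    congr 1; ext i; ring
  simp only [mul_comm _ ((centerP d u).ofLp _)]
  rw [this, hsum]; ring

lemma norm_centerP_le (d : ℕ) (hd : 1 ≤ d) (h : EuclideanSpace ℝ (Fin d)) :
    ‖centerP d h‖ ≤ ‖h‖ := by
  have h1 : ‖centerP d h‖ ^ 2 = inner ℝ (centerP d h) h := by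
    rw [← inner_centerP d hd h h, real_inner_self_eq_norm_sq]
  have h2 : (inner ℝ (centerP d h) h : ℝ) ≤ ‖centerP d h‖ * ‖h‖ := real_inner_le_norm _ _
  rcases eq_or_lt_of_le (norm_nonneg (centerP d h)) with h0 | h0
  · rw [← h0]; exact norm_nonneg h
  · nlinarith [h1, h2]

/-- Fix d ≥ 1 and ε > 0, let v = P u and σ = σ(u).  The LayerNorm
Jacobian J_LN(u) : h ↦ (1/σ)·P h − (⟨v, h⟩/(d·σ³))·v has operator norm at most 1/σ and
hence at most 1/√ε, uniformly in u.  (The LayerNorm Jacobian is O(1) in operator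
norm.) -/
theorem layerNorm_jacobian_opNorm_le (d : ℕ) (hd : 1 ≤ d) (ε : ℝ) (hε : 0 < ε)
    (u : EuclideanSpace ℝ (Fin d))
    (J : EuclideanSpace ℝ (Fin d) →L[ℝ] EuclideanSpace ℝ (Fin d))
    (hJ : ∀ h : EuclideanSpace ℝ (Fin d),
      J h = (lnSigma d ε u)⁻¹ • centerP d h
          - ((inner ℝ (centerP d u) h : ℝ) / (d * (lnSigma d ε u) ^ 3)) • centerP d u) :
    ‖J‖ ≤ (lnSigma d ε u)⁻¹ ∧ ‖J‖ ≤ (Real.sqrt ε)⁻¹ := by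
  set σ := lnSigma d ε u with hσdef
  set v := centerP d u with hvdef
  have hd0 : (0:ℝ) < d := by positivity
  have hinner : (0:ℝ) ≤ ‖v‖ ^ 2 / d := by positivity
  have hσpos : 0 < σ := Real.sqrt_pos.mpr (by linarith)
  have hσsq : σ ^ 2 = ‖v‖ ^ 2 / d + ε := Real.sq_sqrt (by linarith)
  have hvd : ‖v‖ ^ 2 ≤ d * σ ^ 2 := by
    rw [hσsq]; rw [mul_add]
    have : (d:ℝ) * (‖v‖^2 / d) = ‖v‖^2 := by field_simp
    nlinarith
  -- main pointwise bound
  have key : ∀ h : EuclideanSpace ℝ (Fin d), ‖J h‖ ≤ σ⁻¹ * ‖h‖ := by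
    intro h
    set t : ℝ := inner ℝ v h with htdef
    have hvh : (inner ℝ v (centerP d h) : ℝ) = t := inner_centerP d hd u h
    have hexp : ‖J h‖ ^ 2
        = σ⁻¹ ^ 2 * ‖centerP d h‖ ^ 2
          - 2 * (σ⁻¹ * (t / (d * σ ^ 3))) * t
          + (t / (d * σ ^ 3)) ^ 2 * ‖v‖ ^ 2 := by
      rw [hJ h, ← htdef, @norm_sub_sq_real]
      rw [inner_smul_left, inner_smul_right, conj_trivial]
      rw [norm_smul, norm_smul, real_inner_comm, hvh]
      rw [mul_pow, mul_pow]
      simp only [Real.norm_eq_abs, mul_pow, sq_abs]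
      ring
    have hbound : ‖J h‖ ^ 2 ≤ σ⁻¹ ^ 2 * ‖centerP d h‖ ^ 2 := by
      rw [hexp]
      have hσ3 : (0:ℝ) < σ ^ 3 := by positivity
      have h1 : (t / (d * σ ^ 3)) ^ 2 * ‖v‖ ^ 2 ≤ (t / (d * σ ^ 3)) ^ 2 * (d * σ ^ 2) :=
        mul_le_mul_of_nonneg_left hvd (by positivity)
      have h2 : (t / (d * σ ^ 3)) ^ 2 * (d * σ ^ 2) = t ^ 2 / (d * σ ^ 4) := by
        field_simp
      have h3 : 2 * (σ⁻¹ * (t / (d * σ ^ 3))) * t = 2 * (t ^ 2 / (d * σ ^ 4)) := by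
        field_simp
      have h4 : (0:ℝ) ≤ t ^ 2 / (d * σ ^ 4) := by positivity
      nlinarith
    have hPh : ‖centerP d h‖ ≤ ‖h‖ := norm_centerP_le d hd h
    have hfinal : ‖J h‖ ^ 2 ≤ (σ⁻¹ * ‖h‖) ^ 2 := by
      have : σ⁻¹ ^ 2 * ‖centerP d h‖ ^ 2 ≤ σ⁻¹ ^ 2 * ‖h‖ ^ 2 := by
        apply mul_le_mul_of_nonneg_left _ (by positivity)
        exact pow_le_pow_left₀ (norm_nonneg _) hPh 2
      calc ‖J h‖ ^ 2 ≤ σ⁻¹ ^ 2 * ‖centerP d h‖ ^ 2 := hbound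
        _ ≤ σ⁻¹ ^ 2 * ‖h‖ ^ 2 := this
        _ = (σ⁻¹ * ‖h‖) ^ 2 := by ring
    have h5 : (0:ℝ) ≤ σ⁻¹ * ‖h‖ := by positivity
    nlinarith [norm_nonneg (J h)]
  have hop : ‖J‖ ≤ σ⁻¹ := J.opNorm_le_bound (by positivity) key
  refine ⟨hop, hop.trans ?_⟩
  have : Real.sqrt ε ≤ σ := Real.sqrt_le_sqrt (by linarith)
  exact inv_anti₀ (Real.sqrt_pos.mpr hε) this
end
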